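/- Define w(x,y) = 2·arctan( sinh(√5·x) / (√5·cosh(y)) ). Then w satisfies the hyperbolic sine-Gordon equation w_xx - w_yy = 2·sin(2w) on the real plane. -/

import Mathlib

open Real


lemma aux_x (a k : ℝ) (hk : k ≠ 0) (t : ℝ) :
    HasDerivAt (fun x' => 2 * Real.arctan (Real.sinh (a * x') / k))
      (2 * a * k * Real.cosh (a * t) / (k ^ 2 + Real.sinh (a * t) ^ 2)) t := by
  have h0 : HasDerivAt (fun x' : ℝ => a * x') a t := by
    simpa using (hasDerivAt_id t).const_mul a
  have h1 : HasDerivAt (fun x' => Real.sinh (a * x') / k)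
      (Real.cosh (a * t) * a / k) t := h0.sinh.div_const k
  have h3 := (h1.arctan).const_mul 2
  refine h3.congr_deriv ?_
  symm
  have hden : k ^ 2 + Real.sinh (a*t) ^ 2 > 0 := by positivity
  field_simp


lemma aux_xx (a k : ℝ) (hk : k ≠ 0) (t : ℝ) :
    HasDerivAt (fun x' => 2 * a * k * Real.cosh (a * x') / (k ^ 2 + Real.sinh (a * x') ^ 2))
      (2 * a ^ 2 * k * Real.sinh (a * t) * (k ^ 2 - Real.sinh (a * t) ^ 2 - 2)
        / (k ^ 2 + Real.sinh (a * t) ^ 2) ^ 2) t := by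
  have h0 : HasDerivAt (fun x' : ℝ => a * x') a t := by
    simpa using (hasDerivAt_id t).const_mul a
  have hN : HasDerivAt (fun x' => 2 * a * k * Real.cosh (a * x'))
      (2 * a * k * (Real.sinh (a * t) * a)) t := (h0.cosh).const_mul (2 * a * k)
  have hB : HasDerivAt (fun x' => k ^ 2 + Real.sinh (a * x') ^ 2)
      (2 * Real.sinh (a * t) * (Real.cosh (a * t) * a)) t := by
    have := ((h0.sinh).pow 2).const_add (k ^ 2)
    simpa [mul_comm, mul_assoc, mul_left_comm] using this
  have hden : k ^ 2 + Real.sinh (a * t) ^ 2 > 0 := by positivity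
  have h := hN.div hB hden.ne'
  refine h.congr_deriv ?_
  symm
  have hch : Real.cosh (a * t) ^ 2 = Real.sinh (a * t) ^ 2 + 1 := Real.cosh_sq _
  field_simp
  linear_combination (2*a^2*Real.sinh (a*t)) * hch

lemma aux_y (a s0 : ℝ) (ha : a ≠ 0) (t : ℝ) :
    HasDerivAt (fun y' => 2 * Real.arctan (s0 / (a * Real.cosh y')))
      (-2 * a * s0 * Real.sinh t / (a ^ 2 * Real.cosh t ^ 2 + s0 ^ 2)) t := by
  have hc0 : 0 < Real.cosh t := Real.cosh_pos t
  have hB : HasDerivAt (fun y' => a * Real.cosh y') (a * Real.sinh t) t :=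
    (Real.hasDerivAt_cosh t).const_mul a
  have h1 : HasDerivAt (fun y' => s0 / (a * Real.cosh y'))
      ((0 * (a * Real.cosh t) - s0 * (a * Real.sinh t)) / (a * Real.cosh t) ^ 2) t :=
    (hasDerivAt_const t s0).div hB (by positivity)
  have h3 := (h1.arctan).const_mul 2
  refine h3.congr_deriv ?_
  symm
  have hden : a ^ 2 * Real.cosh t ^ 2 + s0 ^ 2 > 0 := by positivity
  field_simp
  ring

lemma aux_yy (a s0 : ℝ) (ha : a ≠ 0) (t : ℝ) :
    HasDerivAt (fun y' => -2 * a * s0 * Real.sinh y' / (a ^ 2 * Real.cosh y' ^ 2 + s0 ^ 2))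
      (-2 * a * s0 * Real.cosh t * (s0 ^ 2 - a ^ 2 * Real.cosh t ^ 2 + 2 * a ^ 2)
        / (a ^ 2 * Real.cosh t ^ 2 + s0 ^ 2) ^ 2) t := by
  have hN : HasDerivAt (fun y' => -2 * a * s0 * Real.sinh y')
      (-2 * a * s0 * Real.cosh t) t := by
    simpa using (Real.hasDerivAt_sinh t).const_mul (-2 * a * s0)
  have hB : HasDerivAt (fun y' => a ^ 2 * Real.cosh y' ^ 2 + s0 ^ 2)
      (a ^ 2 * (2 * Real.cosh t * Real.sinh t)) t := by
    have := ((((Real.hasDerivAt_cosh t)).pow 2).const_mul (a ^ 2)).add_const (s0 ^ 2)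
    simpa [mul_comm, mul_assoc, mul_left_comm] using this
  have hc0 : 0 < Real.cosh t := Real.cosh_pos t
  have hden : a ^ 2 * Real.cosh t ^ 2 + s0 ^ 2 > 0 := by positivity
  have h := hN.div hB hden.ne'
  refine h.congr_deriv ?_
  symm
  have hsh : Real.sinh t ^ 2 = Real.cosh t ^ 2 - 1 := by
    have := Real.cosh_sq t; linarith
  field_simp
  linear_combination (-2*a^2*s0) * hsh

lemma aux_sin (u : ℝ) :
    Real.sin (2 * (2 * Real.arctan u)) = 4 * u * (1 - u ^ 2) / (1 + u ^ 2) ^ 2 := by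
  set q := Real.sqrt (1 + u ^ 2) with hq
  have hq2 : q ^ 2 = 1 + u ^ 2 := Real.sq_sqrt (by positivity)
  have hq0 : q > 0 := Real.sqrt_pos.mpr (by positivity)
  rw [Real.sin_two_mul, Real.sin_two_mul, Real.cos_two_mul, Real.sin_arctan, Real.cos_arctan]
  rw [← hq, show (1:ℝ) + u ^ 2 = q ^ 2 from hq2.symm, show (1:ℝ) - u ^ 2 = 2 - q ^ 2 by linarith [hq2]]
  field_simp
  ring

theorem stmt_5 :
    let w : ℝ → ℝ → ℝ := fun x y =>
      2 * Real.arctan (Real.sinh (Real.sqrt 5 * x) / (Real.sqrt 5 * Real.cosh y))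
    ∀ x y : ℝ,
      deriv (deriv (fun x' => w x' y)) x - deriv (deriv (fun y' => w x y')) y
        = 2 * Real.sin (2 * w x y) := by
  intro w x y
  have ha2 : Real.sqrt 5 ^ 2 = 5 := Real.sq_sqrt (by norm_num)
  have ha0 : (0:ℝ) < Real.sqrt 5 := Real.sqrt_pos.mpr (by norm_num)
  set a := Real.sqrt 5 with ha_def
  have hc0 : 0 < Real.cosh y := Real.cosh_pos y
  have hk : a * Real.cosh y ≠ 0 := by positivity
  have hd1 : deriv (fun x' => w x' y) = fun t =>
      2 * a * (a * Real.cosh y) * Real.cosh (a * t)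
        / ((a * Real.cosh y) ^ 2 + Real.sinh (a * t) ^ 2) := by
    funext t
    exact (aux_x a (a * Real.cosh y) hk t).deriv
  have hd2 : deriv (deriv (fun x' => w x' y)) x =
      2 * a ^ 2 * (a * Real.cosh y) * Real.sinh (a * x)
        * ((a * Real.cosh y) ^ 2 - Real.sinh (a * x) ^ 2 - 2)
        / ((a * Real.cosh y) ^ 2 + Real.sinh (a * x) ^ 2) ^ 2 := by
    rw [hd1]
    exact (aux_xx a (a * Real.cosh y) hk x).deriv
  have he1 : deriv (fun y' => w x y') = fun t =>
      -2 * a * Real.sinh (a * x) * Real.sinh t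
        / (a ^ 2 * Real.cosh t ^ 2 + Real.sinh (a * x) ^ 2) := by
    funext t
    exact (aux_y a (Real.sinh (a * x)) ha0.ne' t).deriv
  have he2 : deriv (deriv (fun y' => w x y')) y =
      -2 * a * Real.sinh (a * x) * Real.cosh y
        * (Real.sinh (a * x) ^ 2 - a ^ 2 * Real.cosh y ^ 2 + 2 * a ^ 2)
        / (a ^ 2 * Real.cosh y ^ 2 + Real.sinh (a * x) ^ 2) ^ 2 := by
    rw [he1]
    exact (aux_yy a (Real.sinh (a * x)) ha0.ne' y).deriv
  rw [hd2, he2,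
    show w x y = 2 * Real.arctan (Real.sinh (a * x) / (a * Real.cosh y)) from rfl,
    aux_sin]
  set s := Real.sinh (a * x) with hs_def
  set c := Real.cosh y with hc_def
  have hD : a ^ 2 * c ^ 2 + s ^ 2 > 0 := by positivity
  field_simp
  linear_combination (s*a^2*c^2 - s^3) * ha2
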